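/- Let J ⊂ ℝ be a compact interval, M ≥ 0 and let f : ℝ → ℝ be twice continuously differentiable with |f'(x)| ≤ M and |f''(x)| ≤ M for all x ∈ J. Let S ⊆ ℝ, α ∈ (0,1], and let ρ₀, ρ̄ : S → ℝ take values in J and satisfy, for all s₁, s₂ ∈ S, |ρ₀(s₁) − ρ₀(s₂)| ≤ H₀|s₁−s₂|^α, |ρ̄(s₁) − ρ̄(s₂)| ≤ H̄|s₁−s₂|^α and |(ρ₀−ρ̄)(s₁) − (ρ₀−ρ̄)(s₂)| ≤ H_d|s₁−s₂|^α, and let D := sup over s ∈ S of |ρ₀(s) − ρ̄(s)|. Then for all s₁, s₂ ∈ S: |f(ρ₀(s₁)) − f(ρ̄(s₁)) − f(ρ₀(s₂)) + f(ρ̄(s₂))| ≤ (M·H_d + M·(H₀ + H̄)·D)·|s₁ − s₂|^α. In particular, the α-Hölder seminorm of f∘ρ₀ − f∘ρ̄ is at most M·H_d + M·(H₀ + H̄)·D. -/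

import Mathlib

/-- Hölder seminorm estimate for the difference `f∘ρ₀ − f∘ρ̄` of
compositions with a `C²` function `f` whose first two derivatives are bounded by `M`
on a compact interval `J = [a,b]` containing the values of `ρ₀` and `ρ̄`. -/
theorem holder_estimate_composition_difference (a b M : ℝ) (hab : a ≤ b) (hM : 0 ≤ M)
    (f : ℝ → ℝ) (hf : ContDiff ℝ 2 f)
    (hf1 : ∀ x ∈ Set.Icc a b, |deriv f x| ≤ M)
    (hf2 : ∀ x ∈ Set.Icc a b, |deriv (deriv f) x| ≤ M)
    (S : Set ℝ) (α : ℝ) (hα : α ∈ Set.Ioc (0:ℝ) 1)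
    (ρ₀ ρbar : ℝ → ℝ) (H₀ Hbar Hd D : ℝ)
    (hmem₀ : ∀ s ∈ S, ρ₀ s ∈ Set.Icc a b)
    (hmembar : ∀ s ∈ S, ρbar s ∈ Set.Icc a b)
    (hH₀ : ∀ s₁ ∈ S, ∀ s₂ ∈ S, |ρ₀ s₁ - ρ₀ s₂| ≤ H₀ * |s₁ - s₂| ^ α)
    (hHbar : ∀ s₁ ∈ S, ∀ s₂ ∈ S, |ρbar s₁ - ρbar s₂| ≤ Hbar * |s₁ - s₂| ^ α)
    (hHd : ∀ s₁ ∈ S, ∀ s₂ ∈ S,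
      |(ρ₀ s₁ - ρbar s₁) - (ρ₀ s₂ - ρbar s₂)| ≤ Hd * |s₁ - s₂| ^ α)
    (hD : ∀ s ∈ S, |ρ₀ s - ρbar s| ≤ D) :
    ∀ s₁ ∈ S, ∀ s₂ ∈ S,
      |f (ρ₀ s₁) - f (ρbar s₁) - f (ρ₀ s₂) + f (ρbar s₂)|
        ≤ (M * Hd + M * (H₀ + Hbar) * D) * |s₁ - s₂| ^ α := by
  obtain ⟨hα0, hα1⟩ := hα
  have hfd : Differentiable ℝ f := hf.differentiable (by norm_num)
  have hfd2 : Differentiable ℝ (deriv f) := by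
    have h2 : ContDiff ℝ ((1 : ℕ) + 1) f := by exact_mod_cast hf
    exact (contDiff_succ_iff_deriv.mp h2).2.2.differentiable (by norm_num)
  have hlip : ∀ u ∈ Set.Icc a b, ∀ v ∈ Set.Icc a b,
      |deriv f u - deriv f v| ≤ M * |u - v| := by
    intro u hu v hv
    have := (convex_Icc a b).norm_image_sub_le_of_norm_deriv_le (f := deriv f)
      (fun x _ => hfd2 x) (fun x hx => by simpa [Real.norm_eq_abs] using hf2 x hx) hv hu
    simpa [Real.norm_eq_abs] using this
  intro s₁ hs₁ s₂ hs₂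
  by_cases hss : s₁ = s₂
  · subst hss
    rw [sub_self, abs_zero, Real.zero_rpow hα0.ne', mul_zero]
    have h0 : f (ρ₀ s₁) - f (ρbar s₁) - f (ρ₀ s₁) + f (ρbar s₁) = 0 := by ring
    rw [h0, abs_zero]
  set h := |s₁ - s₂| ^ α with hh
  have hpos : 0 < h := Real.rpow_pos_of_pos (abs_pos.mpr (sub_ne_zero.mpr hss)) α
  have hH0n : 0 ≤ H₀ := by
    have h1 := hH₀ s₁ hs₁ s₂ hs₂
    nlinarith [abs_nonneg (ρ₀ s₁ - ρ₀ s₂)]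
  have hHbn : 0 ≤ Hbar := by
    have h1 := hHbar s₁ hs₁ s₂ hs₂
    nlinarith [abs_nonneg (ρbar s₁ - ρbar s₂)]
  have hDn : 0 ≤ D := le_trans (abs_nonneg _) (hD s₁ hs₁)
  obtain ⟨hx₁a, hx₁b⟩ := hmem₀ s₁ hs₁
  obtain ⟨hx₂a, hx₂b⟩ := hmem₀ s₂ hs₂
  obtain ⟨hy₁a, hy₁b⟩ := hmembar s₁ hs₁
  obtain ⟨hy₂a, hy₂b⟩ := hmembar s₂ hs₂
  set d₁ := ρ₀ s₁ - ρbar s₁ with hd₁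
  set d₂ := ρ₀ s₂ - ρbar s₂ with hd₂
  set F : ℝ → ℝ := fun t => f (ρbar s₁ + t * d₁) - f (ρbar s₂ + t * d₂) with hF
  have hF' : ∀ t : ℝ, HasDerivAt F
      (deriv f (ρbar s₁ + t * d₁) * d₁ - deriv f (ρbar s₂ + t * d₂) * d₂) t := by
    intro t
    have h1 : HasDerivAt (fun t : ℝ => ρbar s₁ + t * d₁) d₁ t := by
      simpa using (hasDerivAt_mul_const d₁).const_add (ρbar s₁)
    have h2 : HasDerivAt (fun t : ℝ => ρbar s₂ + t * d₂) d₂ t := by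
      simpa using (hasDerivAt_mul_const d₂).const_add (ρbar s₂)
    have c1 := ((hfd (ρbar s₁ + t * d₁)).hasDerivAt.comp t h1)
    have c2 := ((hfd (ρbar s₂ + t * d₂)).hasDerivAt.comp t h2)
    exact c1.sub c2
  obtain ⟨c, hc, hceq⟩ := exists_hasDerivAt_eq_slope F
    (fun t => deriv f (ρbar s₁ + t * d₁) * d₁ - deriv f (ρbar s₂ + t * d₂) * d₂)
    one_pos (fun t _ => (hF' t).continuousAt.continuousWithinAt)
    (fun t _ => hF' t)
  obtain ⟨hc0, hc1⟩ := hc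
  have hkey : f (ρ₀ s₁) - f (ρbar s₁) - f (ρ₀ s₂) + f (ρbar s₂)
      = deriv f (ρbar s₁ + c * d₁) * d₁ - deriv f (ρbar s₂ + c * d₂) * d₂ := by
    rw [hceq]
    simp only [hF, hd₁, hd₂, one_mul, zero_mul, add_zero, sub_zero, div_one]
    ring
  clear hceq hF'
  clear_value F
  clear hF F
  set u₁ := ρbar s₁ + c * d₁ with hu₁def
  set u₂ := ρbar s₂ + c * d₂ with hu₂def
  have hu₁ : u₁ ∈ Set.Icc a b := by
    have hmem := (convex_Icc a b) (Set.mem_Icc.mpr ⟨hy₁a, hy₁b⟩)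
      (Set.mem_Icc.mpr ⟨hx₁a, hx₁b⟩) (by linarith : (0:ℝ) ≤ 1 - c) hc0.le (by ring)
    have he : u₁ = (1 - c) • ρbar s₁ + c • ρ₀ s₁ := by
      simp only [smul_eq_mul, hu₁def, hd₁]; ring
    rw [he]; exact hmem
  have hu₂ : u₂ ∈ Set.Icc a b := by
    have hmem := (convex_Icc a b) (Set.mem_Icc.mpr ⟨hy₂a, hy₂b⟩)
      (Set.mem_Icc.mpr ⟨hx₂a, hx₂b⟩) (by linarith : (0:ℝ) ≤ 1 - c) hc0.le (by ring)
    have he : u₂ = (1 - c) • ρbar s₂ + c • ρ₀ s₂ := by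
      simp only [smul_eq_mul, hu₂def, hd₂]; ring
    rw [he]; exact hmem
  have hudiff : u₁ - u₂ = (1 - c) * (ρbar s₁ - ρbar s₂) + c * (ρ₀ s₁ - ρ₀ s₂) := by
    simp only [hu₁def, hu₂def, hd₁, hd₂]; ring
  have htri : |u₁ - u₂| ≤ (1 - c) * |ρbar s₁ - ρbar s₂| + c * |ρ₀ s₁ - ρ₀ s₂| := by
    rw [hudiff]
    calc |(1 - c) * (ρbar s₁ - ρbar s₂) + c * (ρ₀ s₁ - ρ₀ s₂)|
        ≤ |(1 - c) * (ρbar s₁ - ρbar s₂)| + |c * (ρ₀ s₁ - ρ₀ s₂)| := abs_add_le _ _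
      _ = (1 - c) * |ρbar s₁ - ρbar s₂| + c * |ρ₀ s₁ - ρ₀ s₂| := by
          rw [abs_mul, abs_mul, abs_of_nonneg (by linarith), abs_of_nonneg hc0.le]
  have hub : |u₁ - u₂| ≤ (H₀ + Hbar) * h := by
    have hb1 := hHbar s₁ hs₁ s₂ hs₂
    have hb2 := hH₀ s₁ hs₁ s₂ hs₂
    have e1 : (1 - c) * |ρbar s₁ - ρbar s₂| ≤ (1 - c) * (Hbar * h) := by
      apply mul_le_mul_of_nonneg_left hb1 (by linarith)
    have e2 : c * |ρ₀ s₁ - ρ₀ s₂| ≤ c * (H₀ * h) := by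
      apply mul_le_mul_of_nonneg_left hb2 hc0.le
    nlinarith [mul_nonneg hc0.le (mul_nonneg hHbn hpos.le),
      mul_nonneg (by linarith : (0:ℝ) ≤ 1 - c) (mul_nonneg hH0n hpos.le)]
  have hlip2 : |deriv f u₁ - deriv f u₂| ≤ M * ((H₀ + Hbar) * h) :=
    (hlip u₁ hu₁ u₂ hu₂).trans (mul_le_mul_of_nonneg_left hub hM)
  rw [hkey]
  have hdec : deriv f u₁ * d₁ - deriv f u₂ * d₂
      = deriv f u₁ * (d₁ - d₂) + (deriv f u₁ - deriv f u₂) * d₂ := by ring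
  rw [hdec]
  calc |deriv f u₁ * (d₁ - d₂) + (deriv f u₁ - deriv f u₂) * d₂|
      ≤ |deriv f u₁| * |d₁ - d₂| + |deriv f u₁ - deriv f u₂| * |d₂| := by
        refine (abs_add_le _ _).trans ?_
        rw [abs_mul, abs_mul]
    _ ≤ M * (Hd * h) + (M * ((H₀ + Hbar) * h)) * D := by
        refine add_le_add
          (mul_le_mul (hf1 _ hu₁) (hHd s₁ hs₁ s₂ hs₂) (abs_nonneg _) hM)
          (mul_le_mul hlip2 (hD s₂ hs₂) (abs_nonneg _)
            (mul_nonneg hM (mul_nonneg (by linarith) hpos.le)))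
    _ = (M * Hd + M * (H₀ + Hbar) * D) * h := by ring
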